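/- arXiv:1103.2806 — 4 statements merged into one kernel-verified Lean document; each statement's English description precedes it below -/
import Mathlib

section
/- Let p be an odd prime. Then the Bernoulli numbers B_{(p−1)p^(m−1)} converge p-adically to (p−1)/p as m → ∞. -/
open Filter Topology Finset

section Aux

variable (p : ℕ) [hp : Fact p.Prime]


lemma aux_norm_nat_lb (j t : ℕ) (hj : 0 < j) (h : j ≤ p ^ t) :
    (p : ℝ) ^ (-(t : ℤ)) ≤ ‖((j : ℚ_[p]))‖ := by
  by_contra hlt
  push_neg at hlt
  rw [show ((j : ℚ_[p])) = (((j : ℤ)) : ℚ_[p]) by push_cast; ring] at hlt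
  rw [Padic.norm_lt_pow_iff_norm_le_pow_sub_one _] at hlt
  have hle : ‖(((j : ℤ)) : ℚ_[p])‖ ≤ (p : ℝ) ^ (-((t + 1 : ℕ) : ℤ)) := by
    refine hlt.trans (le_of_eq ?_)
    congr 1; omega
  have hd : ((p : ℤ) ^ (t + 1)) ∣ (j : ℤ) :=
    (Padic.norm_int_le_pow_iff_dvd (j : ℤ) (t + 1)).mp hle
  have h2 : (p : ℤ) ^ (t + 1) ≤ (j : ℤ) := Int.le_of_dvd (by exact_mod_cast hj) hd
  have h3 : p ^ (t + 1) ≤ j := by exact_mod_cast h2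
  have h4 : p ^ t < p ^ (t + 1) := Nat.pow_lt_pow_succ hp.1.one_lt
  omega

lemma choose_succ_eq (n i : ℕ) (h : i ≤ n) :
    (n + 1).choose i * (n + 1 - i) = n.choose i * (n + 1) := by
  have h1 : (n + 1).choose i = (n + 1).choose (n + 1 - i) :=
    (Nat.choose_symm (by omega)).symm
  have h2 := Nat.add_one_mul_choose_eq n (n - i)
  rw [Nat.choose_symm h] at h2
  have h3 : n + 1 - i = (n - i) + 1 := by omega
  rw [h1, h3]
  simpa [Nat.succ_eq_add_one, mul_comm] using h2.symm

lemma faulhaber' (n N : ℕ) :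
    (∑ k ∈ range N, (k : ℚ) ^ n) =
      ∑ i ∈ range (n + 1),
        bernoulli i * (n.choose i) * (N : ℚ) ^ (n + 1 - i) / ((n + 1 - i : ℕ) : ℚ) := by
  rw [sum_range_pow]
  refine Finset.sum_congr rfl fun i hi => ?_
  have hi' : i ≤ n := Nat.lt_succ_iff.mp (Finset.mem_range.mp hi)
  have key : (((n + 1).choose i : ℚ)) * ((n + 1 - i : ℕ) : ℚ)
      = (n.choose i : ℚ) * ((n : ℚ) + 1) := by
    have := choose_succ_eq n i hi'
    exact_mod_cast congrArg (Nat.cast : ℕ → ℚ) this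
  have h1 : ((n : ℚ) + 1) ≠ 0 := by positivity
  have h2 : ((n + 1 - i : ℕ) : ℚ) ≠ 0 := by
    have : 0 < n + 1 - i := by omega
    exact_mod_cast this.ne'
  field_simp
  linear_combination bernoulli i * (N : ℚ) ^ (n + 1 - i) * key


-- norm of natural number cast is ≤ 1
lemma norm_nat_le_one (k : ℕ) : ‖((k : ℚ_[p]))‖ ≤ 1 := by
  rw [show ((k : ℚ_[p])) = (((k : ℤ)) : ℚ_[p]) by push_cast; ring]
  exact Padic.norm_int_le_one _

-- key term bound: ‖p^a / j‖ ≤ p^(t-a) when 0 < j ≤ p^t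
lemma term_norm_le (a t j : ℕ) (hj : 0 < j) (hjt : j ≤ p ^ t) :
    ‖((p : ℚ_[p]) ^ a / (j : ℚ_[p]))‖ ≤ (p : ℝ) ^ ((t : ℤ) - a) := by
  have hj0 : ((j : ℚ_[p])) ≠ 0 := by
    exact_mod_cast Nat.cast_ne_zero.mpr hj.ne'
  rw [norm_div, Padic.norm_p_pow]
  have h1 := aux_norm_nat_lb p j t hj hjt
  have h2 : (0:ℝ) < ‖((j : ℚ_[p]))‖ := norm_pos_iff.mpr hj0
  rw [div_le_iff₀ h2]
  calc (p:ℝ) ^ (-(a:ℤ)) = (p:ℝ) ^ ((t:ℤ) - a) * (p:ℝ) ^ (-(t:ℤ)) := by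
        rw [← zpow_add₀ (by exact_mod_cast hp.1.pos.ne' : (p:ℝ) ≠ 0)]; ring_nf
    _ ≤ (p:ℝ) ^ ((t:ℤ) - a) * ‖((j : ℚ_[p]))‖ := by
        have : (0:ℝ) ≤ (p:ℝ) ^ ((t:ℤ) - a) := le_of_lt (zpow_pos (by exact_mod_cast hp.1.pos) _)
        exact mul_le_mul_of_nonneg_left h1 this

lemma pB_bound : ∀ n : ℕ, ‖((p : ℚ_[p])) * ((bernoulli n : ℚ) : ℚ_[p])‖ ≤ 1 := by
  intro n
  induction n using Nat.strong_induction_on with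
  | _ n ih =>
    rcases Nat.eq_zero_or_pos n with rfl | hn
    · simp only [bernoulli_zero, Rat.cast_one, mul_one]
      have := Padic.norm_p (p := p)
      rw [show ((p:ℚ_[p])) = ((p:ℚ_[p])) from rfl, this]
      rw [inv_le_one_iff₀]
      right
      exact_mod_cast hp.1.one_le
    · -- Faulhaber with N = p
      have hf := faulhaber' n p
      rw [Finset.sum_range_succ] at hf
      have hlast : bernoulli n * (n.choose n) * (p : ℚ) ^ (n + 1 - n) / ((n + 1 - n : ℕ) : ℚ)
          = (p : ℚ) * bernoulli n := by
        have h1 : n + 1 - n = 1 := by omega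
        rw [h1, Nat.choose_self]; push_cast; ring
      rw [hlast] at hf
      have hq : (p : ℚ) * bernoulli n
          = (∑ k ∈ range p, (k : ℚ) ^ n)
            - ∑ i ∈ range n, bernoulli i * (n.choose i) * (p : ℚ) ^ (n + 1 - i) / ((n + 1 - i : ℕ) : ℚ) := by
        linarith [hf]
      have hqp : (p : ℚ_[p]) * ((bernoulli n : ℚ) : ℚ_[p])
          = (∑ k ∈ range p, (k : ℚ_[p]) ^ n)
            - ∑ i ∈ range n, ((bernoulli i : ℚ) : ℚ_[p]) * (n.choose i) * (p : ℚ_[p]) ^ (n + 1 - i) / ((n + 1 - i : ℕ) : ℚ_[p]) := by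
        have := congrArg (fun q : ℚ => (q : ℚ_[p])) hq
        push_cast at this
        convert this using 2 <;> push_cast <;> ring
      rw [hqp]
      have hA : ‖∑ k ∈ range p, (k : ℚ_[p]) ^ n‖ ≤ 1 := by
        refine IsUltrametricDist.norm_sum_le_of_forall_le_of_nonneg zero_le_one fun i _ => ?_
        rw [norm_pow]
        exact pow_le_one₀ (norm_nonneg _) (norm_nat_le_one p i)
      have hB : ‖∑ i ∈ range n, ((bernoulli i : ℚ) : ℚ_[p]) * (n.choose i) * (p : ℚ_[p]) ^ (n + 1 - i) / ((n + 1 - i : ℕ) : ℚ_[p])‖ ≤ 1 := by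
        refine IsUltrametricDist.norm_sum_le_of_forall_le_of_nonneg zero_le_one fun i hi => ?_
        have hi' : i < n := Finset.mem_range.mp hi
        have hrw : ((bernoulli i : ℚ) : ℚ_[p]) * (n.choose i) * (p : ℚ_[p]) ^ (n + 1 - i) / ((n + 1 - i : ℕ) : ℚ_[p])
            = ((p : ℚ_[p]) * (bernoulli i : ℚ)) * (n.choose i) * ((p : ℚ_[p]) ^ (n - i) / ((n + 1 - i : ℕ) : ℚ_[p])) := by
          have h1 : n + 1 - i = (n - i) + 1 := by omega
          rw [h1, pow_succ]
          ring
        rw [hrw]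
        have ht : ‖(p : ℚ_[p]) ^ (n - i) / ((n + 1 - i : ℕ) : ℚ_[p])‖ ≤ 1 := by
          have h2 : n + 1 - i ≤ p ^ (n - i) := by
            calc n + 1 - i ≤ 2 ^ (n - i) := by
                  have := @Nat.lt_two_pow_self (n - i)
                  omega
            _ ≤ p ^ (n - i) := Nat.pow_le_pow_left hp.1.two_le _
          have := term_norm_le p (n - i) (n - i) (n + 1 - i) (by omega) h2
          simpa using this
        calc ‖((p : ℚ_[p]) * (bernoulli i : ℚ)) * (n.choose i) * ((p : ℚ_[p]) ^ (n - i) / ((n + 1 - i : ℕ) : ℚ_[p]))‖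
            = ‖(p : ℚ_[p]) * (bernoulli i : ℚ)‖ * ‖((n.choose i : ℚ_[p]))‖ * ‖(p : ℚ_[p]) ^ (n - i) / ((n + 1 - i : ℕ) : ℚ_[p])‖ := by
              rw [norm_mul, norm_mul]
          _ ≤ 1 * 1 * 1 := by
              gcongr <;> first
                | exact ih i hi'
                | exact norm_nat_le_one p _
                | exact ht
                | positivity
          _ = 1 := by norm_num
      calc ‖_ - _‖ ≤ max ‖∑ k ∈ range p, (k : ℚ_[p]) ^ n‖ ‖∑ i ∈ range n, ((bernoulli i : ℚ) : ℚ_[p]) * (n.choose i) * (p : ℚ_[p]) ^ (n + 1 - i) / ((n + 1 - i : ℕ) : ℚ_[p])‖ := by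
            rw [sub_eq_add_neg]
            refine le_trans (Padic.nonarchimedean _ _) (le_of_eq ?_)
            rw [norm_neg]
        _ ≤ 1 := max_le hA hB


-- integer congruence
lemma sum_pow_congr (m M : ℕ) (hm1 : 1 ≤ m) (hM : 1 ≤ M) (hmn : m ≤ (p - 1) * p ^ (m - 1)) :
    ((p : ℤ) ^ m) ∣ (∑ k ∈ range (p ^ M), (k : ℤ) ^ ((p - 1) * p ^ (m - 1))) - ((p ^ (M - 1) * (p - 1) : ℕ) : ℤ) := by
  have hcount : (((range (p ^ M)).filter fun k => ¬ p ∣ k).card) = p ^ (M - 1) * (p - 1) := by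
    rw [← Nat.totient_prime_pow hp.out hM]
    rw [Nat.totient]
    congr 1
    apply Finset.filter_congr
    intro k _
    exact ((Nat.coprime_pow_left_iff hM _ _).trans (Nat.Prime.coprime_iff_not_dvd hp.out)).symm
  have hsplit : (∑ k ∈ range (p ^ M), (k : ℤ) ^ ((p - 1) * p ^ (m - 1))) - ((p ^ (M - 1) * (p - 1) : ℕ) : ℤ)
      = ∑ k ∈ range (p ^ M), ((k : ℤ) ^ ((p - 1) * p ^ (m - 1)) - if p ∣ k then 0 else 1) := by
    rw [Finset.sum_sub_distrib]
    congr 1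
    rw [Finset.sum_ite, Finset.sum_const, Finset.sum_const, hcount]
    simp
  rw [hsplit]
  apply Finset.dvd_sum
  intro k _
  by_cases hdvd : p ∣ k
  · simp only [hdvd, if_true, sub_zero]
    obtain ⟨j, rfl⟩ := hdvd
    calc (p : ℤ) ^ m ∣ (p : ℤ) ^ ((p - 1) * p ^ (m - 1)) := pow_dvd_pow _ hmn
      _ ∣ ((p * j : ℕ) : ℤ) ^ ((p - 1) * p ^ (m - 1)) := by
          push_cast; rw [mul_pow]; exact Dvd.intro _ rfl
  · simp only [hdvd, if_false]
    have hco : (k).Coprime (p ^ m) :=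
      Nat.Coprime.pow_right _ ((Nat.Prime.coprime_iff_not_dvd hp.out).mpr hdvd).symm
    have heuler := Nat.ModEq.pow_totient hco
    rw [Nat.totient_prime_pow hp.out hm1] at heuler
    have hmod : k ^ ((p - 1) * p ^ (m - 1)) ≡ 1 [MOD p ^ m] := by
      rwa [mul_comm] at heuler
    have := hmod.dvd
    push_cast at this ⊢
    have h2 := dvd_neg.mpr this
    rwa [neg_sub] at h2


lemma main_est (m : ℕ) (hm : 6 ≤ m) :
    ‖((bernoulli ((p - 1) * p ^ (m - 1)) : ℚ) : ℚ_[p]) - ((((p : ℚ) - 1) / p : ℚ) : ℚ_[p])‖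
      ≤ (p : ℝ) ^ (2 - ((m / 2 : ℕ) : ℤ)) := by
  have hp2 : 2 ≤ p := hp.out.two_le
  have hp0 : (p : ℚ) ≠ 0 := by exact_mod_cast hp.out.pos.ne'
  have hpR1 : (1 : ℝ) < (p : ℝ) := by exact_mod_cast hp.out.one_lt
  set n := (p - 1) * p ^ (m - 1) with hn
  set M := m / 2 with hMdef
  have hM1 : 1 ≤ M := by omega
  have hM3 : 3 ≤ M := by omega
  have hMm : 2 * M ≤ m := by omega
  have hmn : m ≤ n := by
    have h1 : m - 1 < p ^ (m - 1) := Nat.lt_pow_self hp.out.one_lt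
    calc m ≤ p ^ (m - 1) := by omega
      _ ≤ (p - 1) * p ^ (m - 1) := Nat.le_mul_of_pos_left _ (by omega)
  have hP0 : ((p : ℚ)) ^ M ≠ 0 := pow_ne_zero _ hp0
  -- Faulhaber rearranged over ℚ
  have hfa := faulhaber' n (p ^ M)
  rw [Finset.sum_range_succ] at hfa
  have hlast : bernoulli n * (n.choose n) * ((p ^ M : ℕ) : ℚ) ^ (n + 1 - n) / ((n + 1 - n : ℕ) : ℚ)
      = bernoulli n * (p : ℚ) ^ M := by
    have h1 : n + 1 - n = 1 := by omega
    rw [h1, Nat.choose_self]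
    push_cast
    ring
  rw [hlast] at hfa
  have hphi : ((p ^ (M - 1) * (p - 1) : ℕ) : ℚ) * (p : ℚ) = ((p : ℚ) - 1) * (p : ℚ) ^ M := by
    have h1 : (p : ℚ) ^ (M - 1) * (p : ℚ) = (p : ℚ) ^ M := by
      rw [← pow_succ]; congr 1; omega
    push_cast [Nat.cast_sub hp.out.one_le]
    linear_combination ((p : ℚ) - 1) * h1
  have hq : (bernoulli n : ℚ) - ((p : ℚ) - 1) / (p : ℚ)
      = ((∑ k ∈ range (p ^ M), (k : ℚ) ^ n) - ((p ^ (M - 1) * (p - 1) : ℕ) : ℚ)) / (p : ℚ) ^ M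
        - (∑ i ∈ range n,
            bernoulli i * (n.choose i) * ((p ^ M : ℕ) : ℚ) ^ (n + 1 - i) / ((n + 1 - i : ℕ) : ℚ))
          / (p : ℚ) ^ M := by
    have hφ2 : ((p ^ (M - 1) * (p - 1) : ℕ) : ℚ) = ((p : ℚ) - 1) * (p : ℚ) ^ M / p := by
      rw [eq_div_iff hp0]
      exact hphi
    rw [hfa, hφ2]
    field_simp
    ring
  -- move to ℚ_p
  have hqp := congrArg (fun q : ℚ => (q : ℚ_[p])) hq
  push_cast at hqp
  push_cast
  rw [hqp, sub_eq_add_neg]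
  refine le_trans (Padic.nonarchimedean _ _) (max_le ?_ ?_)
  · -- main term
    have hnum : (∑ x ∈ range (p ^ M), (x : ℚ_[p]) ^ n) - (p : ℚ_[p]) ^ (M - 1) * ((p - 1 : ℕ) : ℚ_[p])
        = ((((∑ k ∈ range (p ^ M), (k : ℤ) ^ n) - ((p ^ (M - 1) * (p - 1) : ℕ) : ℤ)) : ℤ) : ℚ_[p]) := by
      push_cast
      ring
    rw [norm_div, hnum]
    have h1 : ‖((((∑ k ∈ range (p ^ M), (k : ℤ) ^ n) - ((p ^ (M - 1) * (p - 1) : ℕ) : ℤ)) : ℤ) : ℚ_[p])‖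
        ≤ (p : ℝ) ^ (-(m : ℤ)) :=
      (Padic.norm_int_le_pow_iff_dvd _ m).mpr (sum_pow_congr p m M (by omega) hM1 hmn)
    have h2 : ‖((p : ℚ_[p])) ^ M‖ = (p : ℝ) ^ (-(M : ℤ)) := Padic.norm_p_pow M
    rw [h2]
    have h3 : (0:ℝ) < (p : ℝ) ^ (-(M : ℤ)) := zpow_pos (by linarith) _
    rw [div_le_iff₀ h3]
    calc ‖_‖ ≤ (p : ℝ) ^ (-(m : ℤ)) := h1
      _ ≤ (p : ℝ) ^ (2 - (M : ℤ) + -(M : ℤ)) := by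
          apply zpow_le_zpow_right₀ hpR1.le
          omega
      _ = (p : ℝ) ^ (2 - (M : ℤ)) * (p : ℝ) ^ (-(M : ℤ)) := by
          rw [← zpow_add₀ (by linarith : (p:ℝ) ≠ 0)]
  · -- error sum
    rw [norm_neg, Finset.sum_div]
    refine IsUltrametricDist.norm_sum_le_of_forall_le_of_nonneg
      (zpow_nonneg (by linarith) _) fun i hi => ?_
    have hi' : i < n := Finset.mem_range.mp hi
    set k := n - i with hkdef
    have hk1 : 1 ≤ k := by omega
    have hMk1 : 1 ≤ M * k := Nat.one_le_iff_ne_zero.mpr (by positivity)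
    have h1 : n + 1 - i = k + 1 := by omega
    have hsplit : ((bernoulli i : ℚ) : ℚ_[p]) * (n.choose i : ℚ_[p]) * ((p : ℚ_[p]) ^ M) ^ (n + 1 - i)
          / ((n + 1 - i : ℕ) : ℚ_[p]) / ((p : ℚ_[p])) ^ M
        = ((p : ℚ_[p]) * (bernoulli i : ℚ)) * (n.choose i : ℚ_[p])
            * ((p : ℚ_[p]) ^ (M * k - 1) / ((k + 1 : ℕ) : ℚ_[p])) := by
      rw [h1, ← pow_mul]
      have h2 : M * (k + 1) = 1 + (M * k - 1) + M := by
        have h3 : M * (k + 1) = M * k + M := by ring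
        omega
      rw [h2, pow_add, pow_add, pow_one]
      have hPq : ((p : ℚ_[p])) ^ M ≠ 0 := pow_ne_zero _ (by exact_mod_cast hp.out.pos.ne')
      have hD : ((k + 1 : ℕ) : ℚ_[p]) ≠ 0 := Nat.cast_ne_zero.mpr (by omega)
      rw [div_div, ← mul_div_assoc, div_eq_div_iff (mul_ne_zero hD hPq) hD]
      ring
    rw [hsplit]
    have hjt : k + 1 ≤ p ^ k := by
      calc k + 1 ≤ 2 ^ k := @Nat.lt_two_pow_self k
        _ ≤ p ^ k := Nat.pow_le_pow_left hp2 _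
    have ht := term_norm_le p (M * k - 1) k (k + 1) (by omega) hjt
    calc ‖((p : ℚ_[p]) * (bernoulli i : ℚ)) * (n.choose i : ℚ_[p])
            * ((p : ℚ_[p]) ^ (M * k - 1) / ((k + 1 : ℕ) : ℚ_[p]))‖
        = ‖(p : ℚ_[p]) * (bernoulli i : ℚ)‖ * ‖(n.choose i : ℚ_[p])‖
            * ‖(p : ℚ_[p]) ^ (M * k - 1) / ((k + 1 : ℕ) : ℚ_[p])‖ := by
          rw [norm_mul, norm_mul]
      _ ≤ 1 * 1 * ((p : ℝ) ^ ((k : ℤ) - (M * k - 1 : ℕ))) := by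
          gcongr <;> first
            | exact pB_bound p i
            | exact norm_nat_le_one p _
            | exact ht
            | positivity
      _ ≤ (p : ℝ) ^ (2 - (M : ℤ)) := by
          rw [one_mul, one_mul]
          apply zpow_le_zpow_right₀ hpR1.le
          have hc : ((M * k - 1 : ℕ) : ℤ) = (M : ℤ) * k - 1 := by
            push_cast [Nat.cast_sub hMk1]
            ring
          rw [hc]
          nlinarith [hM1, hk1, (by exact_mod_cast hM1 : (1:ℤ) ≤ (M:ℤ)), (by exact_mod_cast hk1 : (1:ℤ) ≤ (k:ℤ))]

end Aux

theorem padic_limit_bernoulli (p : ℕ) [Fact p.Prime] (hodd : Odd p) :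
    Tendsto (fun m : ℕ => ((bernoulli ((p - 1) * p ^ (m - 1)) : ℚ) : ℚ_[p]))
      atTop (𝓝 ((((p : ℚ) - 1) / p : ℚ) : ℚ_[p])) := by
  have hpR1 : (1 : ℝ) < (p : ℝ) := by exact_mod_cast (Fact.out : p.Prime).one_lt
  have hp0R : (p : ℝ) ≠ 0 := by linarith
  rw [tendsto_iff_norm_sub_tendsto_zero]
  have hg : Tendsto (fun m : ℕ => (p : ℝ) ^ (2 - ((m / 2 : ℕ) : ℤ))) atTop (𝓝 0) := by
    have houter : Tendsto (fun j : ℕ => (p : ℝ) ^ (2 - (j : ℤ))) atTop (𝓝 0) := by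
      have h1 : Tendsto (fun j : ℕ => (p : ℝ) ^ (2 : ℤ) * ((p : ℝ)⁻¹) ^ j) atTop
          (𝓝 ((p : ℝ) ^ (2 : ℤ) * 0)) := by
        refine Tendsto.const_mul _ ?_
        refine tendsto_pow_atTop_nhds_zero_of_lt_one (by positivity) ?_
        rw [inv_lt_one_iff₀]
        right; exact hpR1
      rw [mul_zero] at h1
      convert h1 using 2 with j
      rw [zpow_sub₀ hp0R, zpow_natCast, inv_pow, div_eq_mul_inv]
    have hinner : Tendsto (fun m : ℕ => m / 2) atTop atTop := by
      apply tendsto_atTop_atTop.mpr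
      intro b
      exact ⟨2 * b, fun a ha => by omega⟩
    exact houter.comp hinner
  apply squeeze_zero' (Filter.Eventually.of_forall fun m => norm_nonneg _) ?_ hg
  rw [Filter.eventually_atTop]
  exact ⟨6, fun m hm => main_est p m hm⟩
end

section
/- Let p be a prime and x ∈ ℤ_p with |x − 1|_p < 1. Then lim_{m→∞} (x^(p^m) − 1)/p^m = log_p(x), where log_p is the p-adic logarithm. -/
open Filter Topology Polynomial

private lemma norm_inv_natCast_le (p : ℕ) [hp : Fact p.Prime] (n : ℕ) (hn : 0 < n) :
    (‖((n : ℚ_[p]))‖)⁻¹ ≤ n := by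
  have h1 : ‖((n:ℚ_[p]))‖ = ((padicNorm p n : ℚ) : ℝ) := by
    rw [← Rat.cast_natCast, Padic.eq_padicNorm]
  have h2 : padicNorm p n = (p : ℚ) ^ (-(padicValNat p n : ℤ)) := by
    rw [padicNorm.eq_zpow_of_nonzero (by exact_mod_cast hn.ne')]
    rw [padicValRat.of_nat]
  have h3 : (p : ℕ) ^ (padicValNat p n) ≤ n := Nat.le_of_dvd hn pow_padicValNat_dvd
  rw [h1, h2, Rat.cast_zpow, ← zpow_neg, neg_neg, Rat.cast_natCast, zpow_natCast]
  exact_mod_cast h3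

/-- key algebraic identity: choose(p^m, k+1) y^(k+1)/p^m = choose(p^m-1, k) y^(k+1)/(k+1) -/
private lemma key_id (p : ℕ) [hp : Fact p.Prime] (y : ℚ_[p]) (m k : ℕ) :
    (Nat.choose (p ^ m) (k + 1) : ℚ_[p]) * y ^ (k + 1) / (p : ℚ_[p]) ^ m
      = (Nat.choose (p ^ m - 1) k : ℚ_[p]) * y ^ (k + 1) / ((k : ℚ_[p]) + 1) := by
  have hpos : 0 < p ^ m := pow_pos hp.out.pos m
  have hnat := Nat.add_one_mul_choose_eq (p ^ m - 1) k
  have hs : p ^ m - 1 + 1 = p ^ m := by omega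
  rw [hs] at hnat
  have hcast : ((p : ℚ_[p]) ^ m) * (Nat.choose (p ^ m - 1) k : ℚ_[p])
      = (Nat.choose (p ^ m) (k + 1) : ℚ_[p]) * ((k : ℚ_[p]) + 1) := by
    exact_mod_cast congrArg (Nat.cast : ℕ → ℚ_[p]) hnat
  have hp0 : ((p : ℚ_[p]) ^ m) ≠ 0 := by
    exact pow_ne_zero _ (Nat.cast_ne_zero.mpr hp.out.ne_zero)
  have hk0 : ((k : ℚ_[p]) + 1) ≠ 0 := Nat.cast_add_one_ne_zero k
  field_simp
  rw [mul_right_comm, ← hcast]; ring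

private lemma choose_tendsto (p : ℕ) [hp : Fact p.Prime] (k : ℕ) :
    Tendsto (fun m : ℕ => (Nat.choose (p ^ m - 1) k : ℚ_[p])) atTop
      (𝓝 ((-1 : ℚ_[p]) ^ k)) := by
  have hfac : ((Nat.factorial k : ℚ_[p])) ≠ 0 := by
    exact_mod_cast Nat.cast_ne_zero.mpr (Nat.factorial_ne_zero k)
  have heval : ∀ m : ℕ, (Nat.choose (p ^ m - 1) k : ℚ_[p])
      = (descPochhammer ℚ_[p] k).eval (((p ^ m - 1 : ℕ) : ℚ_[p])) / (Nat.factorial k : ℚ_[p]) := by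
    intro m
    rw [descPochhammer_eval_eq_descFactorial, Nat.descFactorial_eq_factorial_mul_choose]
    push_cast
    field_simp
  have hlim : Tendsto (fun m : ℕ => (((p ^ m - 1 : ℕ) : ℚ_[p]))) atTop (𝓝 (-1)) := by
    have : ∀ m : ℕ, (((p ^ m - 1 : ℕ) : ℚ_[p])) = (p : ℚ_[p]) ^ m - 1 := by
      intro m
      rw [Nat.cast_sub (Nat.one_le_iff_ne_zero.mpr (pow_pos hp.out.pos m).ne')]
      push_cast; ring
    simp only [this]
    have h0 : Tendsto (fun m : ℕ => (p : ℚ_[p]) ^ m) atTop (𝓝 0) :=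
      tendsto_pow_atTop_nhds_zero_of_norm_lt_one Padic.norm_p_lt_one
    simpa using h0.sub_const 1
  have hc : Continuous fun z : ℚ_[p] => (descPochhammer ℚ_[p] k).eval z :=
    (descPochhammer ℚ_[p] k).continuous
  have hdesc : (descPochhammer ℚ_[p] k).eval (-1 : ℚ_[p]) = (-1) ^ k * (Nat.factorial k) := by
    have h := ascPochhammer_eval_neg_eq_descPochhammer (R := ℚ_[p]) (-1) k
    rw [neg_neg, ascPochhammer_eval_one] at h
    have hsq : (-1 : ℚ_[p]) ^ k * (-1) ^ k = 1 := by
      rw [← pow_add]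
      exact Even.neg_one_pow ⟨k, rfl⟩
    calc (descPochhammer ℚ_[p] k).eval (-1 : ℚ_[p])
        = ((-1 : ℚ_[p]) ^ k * (-1) ^ k) * (descPochhammer ℚ_[p] k).eval (-1 : ℚ_[p]) := by
          rw [hsq, one_mul]
      _ = (-1 : ℚ_[p]) ^ k * (Nat.factorial k) := by rw [mul_assoc, ← h]
  simp only [heval]
  have := ((hc.tendsto _).comp hlim).div_const ((Nat.factorial k : ℚ_[p]))
  rw [hdesc] at this
  simpa [mul_div_assoc, div_self hfac] using this

/-- The p-adic logarithm, defined by the usual power series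
`log_p(x) = ∑_{n ≥ 1} (-1)^(n+1) (x-1)^n / n` (the `n = 0` term vanishes since
division by zero is zero). -/
noncomputable def plog (p : ℕ) [Fact p.Prime] (x : ℚ_[p]) : ℚ_[p] :=
  ∑' n : ℕ, (-1) ^ (n + 1) * (x - 1) ^ n / (n : ℚ_[p])

/-- Leopoldt's formula: `lim_{m→∞} (x^(p^m) - 1)/p^m = log_p x` for `|x - 1|_p < 1`. -/
theorem leopoldt_formula (p : ℕ) [Fact p.Prime] (x : ℤ_[p])
    (hx : ‖(x : ℚ_[p]) - 1‖ < 1) :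
    Tendsto (fun m : ℕ => ((x : ℚ_[p]) ^ (p ^ m) - 1) / (p : ℚ_[p]) ^ m)
      atTop (𝓝 (plog p (x : ℚ_[p]))) := by
  have hp : Fact p.Prime := inferInstance
  set y : ℚ_[p] := (x : ℚ_[p]) - 1 with hy
  set F : ℕ → ℕ → ℚ_[p] := fun m n =>
    if n = 0 then 0 else (Nat.choose (p ^ m) n : ℚ_[p]) * y ^ n / (p : ℚ_[p]) ^ m with hF
  set g : ℕ → ℚ_[p] := fun n => (-1) ^ (n + 1) * y ^ n / (n : ℚ_[p]) with hg
  have hp0 : ∀ m : ℕ, ((p : ℚ_[p]) ^ m) ≠ 0 := fun m =>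
    pow_ne_zero _ (Nat.cast_ne_zero.mpr hp.out.ne_zero)
  -- Step A
  have stepA : ∀ m : ℕ, ((x : ℚ_[p]) ^ (p ^ m) - 1) / (p : ℚ_[p]) ^ m = ∑' n, F m n := by
    intro m
    rw [tsum_eq_sum (s := Finset.range (p ^ m + 1)) (by
      intro n hn
      simp only [Finset.mem_range, not_lt] at hn
      have hn0 : n ≠ 0 := by omega
      simp [hF, hn0, Nat.choose_eq_zero_of_lt (by omega : p ^ m < n)])]
    have hsplit : ∀ n : ℕ, F m n = (Nat.choose (p ^ m) n : ℚ_[p]) * y ^ n / (p : ℚ_[p]) ^ m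
        - (if n = 0 then 1 / (p : ℚ_[p]) ^ m else 0) := by
      intro n
      rcases eq_or_ne n 0 with rfl | hn
      · simp [hF]
      · simp [hF, hn]
    simp only [hsplit]
    rw [Finset.sum_sub_distrib, Finset.sum_ite_eq' (Finset.range (p ^ m + 1)) 0
      (fun _ => 1 / (p : ℚ_[p]) ^ m)]
    have hmem : (0 : ℕ) ∈ Finset.range (p ^ m + 1) := by simp
    rw [if_pos hmem]
    have hbin : ∑ n ∈ Finset.range (p ^ m + 1),
        (Nat.choose (p ^ m) n : ℚ_[p]) * y ^ n / (p : ℚ_[p]) ^ m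
        = ((x : ℚ_[p]) ^ (p ^ m)) / (p : ℚ_[p]) ^ m := by
      rw [← Finset.sum_div]
      congr 1
      have := add_pow y 1 (p ^ m)
      simp only [one_pow, mul_one] at this
      have hx1 : y + 1 = (x : ℚ_[p]) := by rw [hy]; ring
      rw [hx1] at this
      rw [this]
      exact Finset.sum_congr rfl fun n _ => by ring
    rw [hbin, sub_div]
  -- Step B : pointwise limits
  have stepB : ∀ n : ℕ, Tendsto (fun m => F m n) atTop (𝓝 (g n)) := by
    intro n
    rcases n with _ | k
    · simp only [hF, hg, if_pos rfl, Nat.cast_zero, div_zero]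
      exact tendsto_const_nhds
    · have hFk : ∀ m : ℕ, F m (k + 1)
          = (Nat.choose (p ^ m - 1) k : ℚ_[p]) * y ^ (k + 1) / ((k : ℚ_[p]) + 1) := by
        intro m
        simp only [hF, if_neg (Nat.succ_ne_zero k)]
        exact key_id p y m k
      simp only [hFk]
      have this1 := ((choose_tendsto p k).mul_const (y ^ (k + 1))).div_const ((k : ℚ_[p]) + 1)
      have heq : g (k + 1) = (-1 : ℚ_[p]) ^ k * y ^ (k + 1) / ((k : ℚ_[p]) + 1) := by
        simp only [hg]
        push_cast
        rw [pow_succ, pow_succ]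
        ring
      rw [heq]
      exact this1
  -- Step C : bound
  have normy : ‖y‖ < 1 := hx
  have stepC : ∀ m n : ℕ, ‖F m n‖ ≤ (n : ℝ) * ‖y‖ ^ n := by
    intro m n
    rcases n with _ | k
    · simp [hF]
    · have hFk : F m (k + 1)
          = (Nat.choose (p ^ m - 1) k : ℚ_[p]) * y ^ (k + 1) / ((k : ℚ_[p]) + 1) := by
        simp only [hF, if_neg (Nat.succ_ne_zero k)]
        exact key_id p y m k
      rw [hFk, norm_div, norm_mul, norm_pow]
      have h1 : ‖(Nat.choose (p ^ m - 1) k : ℚ_[p])‖ ≤ 1 := by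
        have := Padic.norm_int_le_one (p := p) (Nat.choose (p ^ m - 1) k : ℤ)
        simpa using this
      have h2 : (‖((k : ℚ_[p]) + 1)‖)⁻¹ ≤ (k + 1 : ℝ) := by
        have := norm_inv_natCast_le p (k + 1) (Nat.succ_pos k)
        push_cast at this ⊢
        exact this
      have hk0 : (0:ℝ) < ‖((k : ℚ_[p]) + 1)‖ := by
        rw [norm_pos_iff]
        exact_mod_cast (Nat.cast_add_one_ne_zero k : ((k:ℚ_[p]) + 1) ≠ 0)
      calc ‖(Nat.choose (p ^ m - 1) k : ℚ_[p])‖ * ‖y‖ ^ (k+1) / ‖((k : ℚ_[p]) + 1)‖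
          ≤ 1 * ‖y‖ ^ (k+1) / ‖((k : ℚ_[p]) + 1)‖ := by
            gcongr
        _ = ‖y‖ ^ (k+1) * (‖((k : ℚ_[p]) + 1)‖)⁻¹ := by rw [one_mul, div_eq_mul_inv]
        _ ≤ ‖y‖ ^ (k+1) * (k + 1 : ℝ) := by
            gcongr
        _ = ((k+1 : ℕ) : ℝ) * ‖y‖ ^ (k+1) := by push_cast; ring
  have hsum : Summable (fun n : ℕ => (n : ℝ) * ‖y‖ ^ n) := by
    have := summable_pow_mul_geometric_of_norm_lt_one (R := ℝ) 1
      (r := ‖y‖) (by rwa [Real.norm_of_nonneg (norm_nonneg _)])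
    simpa using this
  have main := tendsto_tsum_of_dominated_convergence (𝓕 := atTop) (f := F) (g := g)
    hsum stepB (Eventually.of_forall stepC)
  have hplog : plog p (x : ℚ_[p]) = ∑' n, g n := rfl
  rw [hplog]
  convert main using 1
  funext m
  exact stepA m
end

section
/- Let p be an odd prime. Then lim_{m→∞} (2^((p−1)p^(m−1)) − 1)/p^m = (1/p) · log_p(2^(p−1)) in ℚ_p, where log_p denotes the p-adic logarithm. -/
open Filter Topology Finset

lemma aux_descFactorial_zmod (N r : ℕ) (hr : r < N) :
    (((N - 1).descFactorial r : ℕ) : ZMod N) = (-1) ^ r * (Nat.factorial r : ZMod N) := by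
  induction r with
  | zero => simp
  | succ r ih =>
    have hr' : r < N := Nat.lt_of_succ_lt hr
    rw [Nat.descFactorial_succ, Nat.cast_mul, ih hr']
    have h1 : ((N - 1 - r : ℕ) : ZMod N) = -1 - (r : ZMod N) := by
      have h2 : N - 1 - r = N - (1 + r) := by omega
      rw [h2, Nat.cast_sub (by omega)]
      push_cast [ZMod.natCast_self]
      ring
    rw [h1, Nat.factorial_succ]
    push_cast
    ring

lemma aux_dvd (N r : ℕ) (hr : r < N) :
    (N : ℤ) ∣ ((N - 1).descFactorial r : ℤ) - (-1) ^ r * (Nat.factorial r : ℤ) := by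
  have h := aux_descFactorial_zmod N r hr
  rw [← ZMod.intCast_zmod_eq_zero_iff_dvd]
  push_cast
  rw [h]
  ring

lemma aux_two_mul_le_pow (p n : ℕ) (hp : 3 ≤ p) : 2 * n ≤ p ^ n := by
  have h3 : 2 * n ≤ 3 ^ n := by
    induction n with
    | zero => simp
    | succ n ih =>
      have : (3:ℕ) ^ (n+1) = 3 ^ n + 2 * 3 ^ n := by ring
      have h1 : 1 ≤ 3 ^ n := Nat.one_le_pow _ _ (by norm_num)
      omega
  calc 2 * n ≤ 3 ^ n := h3
    _ ≤ p ^ n := Nat.pow_le_pow_left hp n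


section Aux

variable {p : ℕ} [Fact p.Prime]

lemma aux_norm_nat (k : ℕ) (hk : k ≠ 0) :
    ‖((k : ℕ) : ℚ_[p])‖ = (p:ℝ) ^ (-(padicValNat p k : ℤ)) := by
  rw [Padic.norm_eq_zpow_neg_valuation (by exact_mod_cast Nat.cast_ne_zero.2 hk), Padic.valuation_natCast]

lemma aux_two_val_fact (k : ℕ) (hp3 : 3 ≤ p) :
    2 * padicValNat p (Nat.factorial k) ≤ k := by
  have h := sub_one_mul_padicValNat_factorial (p := p) k
  have h2 : 2 ≤ p - 1 := by omega
  calc 2 * padicValNat p (Nat.factorial k) ≤ (p - 1) * padicValNat p (Nat.factorial k) :=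
        Nat.mul_le_mul_right _ h2
    _ = k - (p.digits k).sum := h
    _ ≤ k := Nat.sub_le _ _

lemma aux_claimA (n k : ℕ) (hk : 1 ≤ k) (hk2 : k ≤ p ^ n) :
    ‖(((p ^ n - 1).choose (k - 1) : ℕ) : ℚ_[p]) - (-1) ^ (k + 1)‖
      ≤ (p:ℝ) ^ ((padicValNat p (Nat.factorial (k - 1)) : ℤ) - n) := by
  have hp0 : (0:ℝ) < p := by exact_mod_cast (Fact.out : p.Prime).pos
  have hpn1 : 1 ≤ p ^ n := Nat.one_le_pow _ _ (Fact.out : p.Prime).pos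
  set N := p ^ n with hN
  set r := k - 1 with hrdef
  have hr : r < N := by omega
  have hdvd : (p:ℤ) ^ n ∣ ((N - 1).descFactorial r : ℤ) - (-1) ^ r * (Nat.factorial r : ℤ) := by
    have := aux_dvd N r hr
    rwa [hN, Nat.cast_pow] at this
  have h1 : ‖(((((N - 1).descFactorial r : ℤ) - (-1) ^ r * (Nat.factorial r : ℤ)) : ℤ) : ℚ_[p])‖
      ≤ (p:ℝ) ^ (-(n:ℤ)) := (Padic.norm_int_le_pow_iff_dvd _ n).2 hdvd
  have h2 : (((((N - 1).descFactorial r : ℤ) - (-1) ^ r * (Nat.factorial r : ℤ)) : ℤ) : ℚ_[p])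
      = ((Nat.factorial r : ℕ) : ℚ_[p]) * ((((N - 1).choose r : ℕ) : ℚ_[p]) - (-1) ^ (k + 1)) := by
    have hd := Nat.descFactorial_eq_factorial_mul_choose (N - 1) r
    have hk1 : k + 1 = r + 2 := by omega
    rw [hk1]
    push_cast [hd]
    ring_nf
  rw [h2, norm_mul, aux_norm_nat _ (Nat.factorial_ne_zero r)] at h1
  set v := (padicValNat p (Nat.factorial r) : ℤ) with hv
  set D := ‖(((N - 1).choose r : ℕ) : ℚ_[p]) - (-1) ^ (k + 1)‖ with hD
  have hpv : (0:ℝ) < (p:ℝ) ^ (-v) := zpow_pos hp0 _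
  calc D = ((p:ℝ) ^ (-v) * D) * (p:ℝ) ^ v := by
        rw [mul_comm ((p:ℝ) ^ (-v)) D, mul_assoc, ← zpow_add₀ (ne_of_gt hp0)]
        simp
    _ ≤ (p:ℝ) ^ (-(n:ℤ)) * (p:ℝ) ^ v := by
        apply mul_le_mul_of_nonneg_right h1 (le_of_lt (zpow_pos hp0 _))
    _ = (p:ℝ) ^ (v - (n:ℤ)) := by
        rw [← zpow_add₀ (ne_of_gt hp0)]; ring_nf

lemma aux_key (hodd : Odd p) (x : ℚ_[p]) (hx : ‖x - 1‖ ≤ (p:ℝ)⁻¹) :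
    Tendsto (fun n : ℕ => (x ^ p ^ n - 1) / (p:ℚ_[p]) ^ n) atTop (𝓝 (plog p x)) := by
  have hp : p.Prime := Fact.out
  have hp3 : 3 ≤ p := by
    obtain ⟨t, ht⟩ := hodd
    have := hp.two_le
    omega
  have hp0 : (0:ℝ) < p := by exact_mod_cast hp.pos
  have hp1 : (1:ℝ) < p := by exact_mod_cast hp.one_lt
  have hpne : (p:ℝ) ≠ 0 := ne_of_gt hp0
  set y := x - 1 with hy
  set f : ℕ → ℚ_[p] := fun k => (-1) ^ (k + 1) * y ^ k / (k : ℚ_[p]) with hf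
  have hplog : plog p x = ∑' k, f k := rfl
  have hfnorm : ∀ k, k ≠ 0 → ‖f k‖ = ‖y‖ ^ k * (p:ℝ) ^ ((padicValNat p k : ℤ)) := by
    intro k hk
    have : ‖f k‖ = ‖y‖ ^ k / ‖((k:ℕ) : ℚ_[p])‖ := by
      simp [hf, norm_div, norm_mul, norm_pow]
    rw [this, aux_norm_nat k hk, zpow_neg, div_eq_mul_inv, inv_inv]
  have hvle : ∀ k : ℕ, k ≠ 0 → (p:ℝ) ^ ((padicValNat p k : ℤ)) ≤ (k:ℝ) := by
    intro k hk
    have h := Nat.le_of_dvd (Nat.pos_of_ne_zero hk) (pow_padicValNat_dvd (p := p) (n := k))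
    rw [zpow_natCast]
    exact_mod_cast h
  have hsummable : Summable f := by
    apply Summable.of_norm_bounded (g := fun k : ℕ => (k:ℝ) * ((p:ℝ)⁻¹) ^ k)
    · simpa using summable_pow_mul_geometric_of_norm_lt_one (R := ℝ) 1
        (r := (p:ℝ)⁻¹) (by rw [Real.norm_eq_abs, abs_of_pos (by positivity)]; exact inv_lt_one_of_one_lt₀ hp1)
    · intro k
      rcases eq_or_ne k 0 with rfl | hk
      · simp [hf]
      · rw [hfnorm k hk]
        have h1 : ‖y‖ ^ k ≤ ((p:ℝ)⁻¹) ^ k := pow_le_pow_left₀ (norm_nonneg _) hx k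
        calc ‖y‖ ^ k * (p:ℝ) ^ ((padicValNat p k : ℤ))
            ≤ ((p:ℝ)⁻¹) ^ k * (k:ℝ) :=
              mul_le_mul h1 (hvle k hk) (le_of_lt (zpow_pos hp0 _)) (by positivity)
          _ = (k:ℝ) * ((p:ℝ)⁻¹) ^ k := mul_comm _ _
  -- the per-n bound
  have key : ∀ n : ℕ, ‖(x ^ p ^ n - 1) / (p:ℚ_[p]) ^ n - plog p x‖ ≤ (p:ℝ) ^ (-(n:ℤ)) := by
    intro n
    set N := p ^ n with hN
    have hpn1 : 1 ≤ N := Nat.one_le_pow _ _ hp.pos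
    have hcast : ((N : ℕ) : ℚ_[p]) = (p:ℚ_[p]) ^ n := by rw [hN]; push_cast; ring
    have hNne : ((N : ℕ) : ℚ_[p]) ≠ 0 := Nat.cast_ne_zero.2 (by omega)
    set B : ℕ → ℚ_[p] := fun k =>
      if k = 0 then 0 else ((N.choose k : ℕ) : ℚ_[p]) / (p:ℚ_[p]) ^ n * y ^ k with hB
    have hBsupp : ∀ k ∉ Finset.range (N + 1), B k = 0 := by
      intro k hk
      simp only [Finset.mem_range, not_lt] at hk
      have hc : N.choose k = 0 := Nat.choose_eq_zero_of_lt (by omega)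
      simp [hB, hc]
    have hBsum : Summable B := summable_of_ne_finset_zero hBsupp
    have hxy : x = y + 1 := by rw [hy]; ring
    have hxp : x ^ N = ∑ k ∈ Finset.range (N + 1), y ^ k * ((N.choose k : ℕ) : ℚ_[p]) := by
      conv_lhs => rw [hxy]
      rw [add_pow]
      refine Finset.sum_congr rfl fun k _ => by rw [one_pow, mul_one]
    have hBtsum : ∑' k, B k = (x ^ N - 1) / (p:ℚ_[p]) ^ n := by
      rw [tsum_eq_sum hBsupp]
      have hBk : ∀ k, B k = y ^ k * ((N.choose k : ℕ) : ℚ_[p]) / (p:ℚ_[p]) ^ n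
          - (if k = 0 then 1 / (p:ℚ_[p]) ^ n else 0) := by
        intro k
        rcases eq_or_ne k 0 with rfl | hk
        · simp [hB]
        · simp only [hB, if_neg hk]
          ring
      rw [Finset.sum_congr rfl fun k _ => hBk k, Finset.sum_sub_distrib]
      rw [Finset.sum_ite_eq' (Finset.range (N + 1)) 0 (fun _ => 1 / (p:ℚ_[p]) ^ n)]
      rw [if_pos (Finset.mem_range.2 (by omega))]
      rw [← Finset.sum_div, ← hxp]
      ring
    have hdiff : (x ^ N - 1) / (p:ℚ_[p]) ^ n - plog p x = ∑' k, (B k - f k) := by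
      rw [hplog, ← hBtsum, hBsum.tsum_sub hsummable]
    have hterm : ∀ k, ‖B k - f k‖ ≤ (p:ℝ) ^ (-(n:ℤ)) := by
      intro k
      rcases eq_or_ne k 0 with rfl | hk0
      · have : B 0 - f 0 = 0 := by simp [hB, hf]
        rw [this, norm_zero]
        positivity
      have hkne : ((k:ℕ) : ℚ_[p]) ≠ 0 := Nat.cast_ne_zero.2 hk0
      have hval : (padicValNat p k : ℤ) + (padicValNat p (Nat.factorial (k - 1)) : ℤ)
          = (padicValNat p (Nat.factorial k) : ℤ) := by
        obtain ⟨m, rfl⟩ : ∃ m, k = m + 1 := ⟨k - 1, by omega⟩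
        rw [Nat.factorial_succ, padicValNat.mul (by omega) (Nat.factorial_ne_zero m)]
        push_cast
        ring
      have hvfact := aux_two_val_fact (p := p) k hp3
      rcases le_or_gt k N with hkN | hkN
      · -- main range
        have hchoose_id : ((N : ℕ) : ℚ_[p]) * (((N - 1).choose (k - 1) : ℕ) : ℚ_[p])
            = ((N.choose k : ℕ) : ℚ_[p]) * (k : ℚ_[p]) := by
          have h := Nat.add_one_mul_choose_eq (N - 1) (k - 1)
          rw [show N - 1 + 1 = N by omega, show k - 1 + 1 = k by omega] at h
          exact_mod_cast h
        have hBf : B k - f k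
            = y ^ k / (k : ℚ_[p]) * ((((N - 1).choose (k - 1) : ℕ) : ℚ_[p]) - (-1) ^ (k + 1)) := by
          simp only [hB, if_neg hk0, hf, ← hcast]
          field_simp
          linear_combination (-1 : ℚ_[p]) * y ^ k * hchoose_id
        rw [hBf, norm_mul, norm_div, aux_norm_nat k hk0, norm_pow]
        have hA := aux_claimA (p := p) n k (by omega) (by omega)
        have hyk : ‖y‖ ^ k ≤ (p:ℝ) ^ (-(k:ℤ)) := by
          rw [zpow_neg, zpow_natCast, ← inv_pow]
          exact pow_le_pow_left₀ (norm_nonneg _) hx k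
        rw [div_eq_mul_inv, ← zpow_neg, neg_neg]
        calc ‖y‖ ^ k * (p:ℝ) ^ ((padicValNat p k : ℤ))
              * ‖(((N - 1).choose (k - 1) : ℕ) : ℚ_[p]) - (-1) ^ (k + 1)‖
            ≤ (p:ℝ) ^ (-(k:ℤ)) * (p:ℝ) ^ ((padicValNat p k : ℤ))
              * ((p:ℝ) ^ ((padicValNat p (Nat.factorial (k - 1)) : ℤ) - n)) := by
              apply mul_le_mul
              · exact mul_le_mul_of_nonneg_right hyk (le_of_lt (zpow_pos hp0 _))
              · exact hA
              · exact norm_nonneg _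
              · positivity
          _ = (p:ℝ) ^ (-(k:ℤ) + (padicValNat p k : ℤ)
              + ((padicValNat p (Nat.factorial (k - 1)) : ℤ) - n)) := by
              rw [← zpow_add₀ hpne, ← zpow_add₀ hpne]
          _ ≤ (p:ℝ) ^ (-(n:ℤ)) := by
              apply zpow_le_zpow_right₀ (le_of_lt hp1)
              omega
      · -- tail
        have hBk0 : B k = 0 := hBsupp k (by simp [Finset.mem_range]; omega)
        rw [hBk0, zero_sub, norm_neg, hfnorm k hk0]
        have hyk : ‖y‖ ^ k ≤ (p:ℝ) ^ (-(k:ℤ)) := by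
          rw [zpow_neg, zpow_natCast, ← inv_pow]
          exact pow_le_pow_left₀ (norm_nonneg _) hx k
        have h2n : 2 * n ≤ N := by rw [hN]; exact aux_two_mul_le_pow p n hp3
        calc ‖y‖ ^ k * (p:ℝ) ^ ((padicValNat p k : ℤ))
            ≤ (p:ℝ) ^ (-(k:ℤ)) * (p:ℝ) ^ ((padicValNat p k : ℤ)) :=
              mul_le_mul_of_nonneg_right hyk (le_of_lt (zpow_pos hp0 _))
          _ = (p:ℝ) ^ (-(k:ℤ) + (padicValNat p k : ℤ)) := by rw [← zpow_add₀ hpne]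
          _ ≤ (p:ℝ) ^ (-(n:ℤ)) := by
              apply zpow_le_zpow_right₀ (le_of_lt hp1)
              omega
    calc ‖(x ^ p ^ n - 1) / (p:ℚ_[p]) ^ n - plog p x‖
        = ‖∑' k, (B k - f k)‖ := by rw [← hN, hdiff]
      _ ≤ (p:ℝ) ^ (-(n:ℤ)) :=
          IsUltrametricDist.norm_tsum_le_of_forall_le_of_nonneg (by positivity) hterm
  rw [tendsto_iff_norm_sub_tendsto_zero]
  apply squeeze_zero (fun n => norm_nonneg _) key
  have heq : ∀ n : ℕ, (p:ℝ) ^ (-(n:ℤ)) = ((p:ℝ)⁻¹) ^ n := by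
    intro n
    rw [zpow_neg, zpow_natCast, inv_pow]
  simp only [heq]
  exact tendsto_pow_atTop_nhds_zero_of_lt_one (by positivity) (inv_lt_one_of_one_lt₀ hp1)

end Aux

theorem padic_limit_two_pow (p : ℕ) [Fact p.Prime] (hodd : Odd p) :
    Tendsto
      (fun m : ℕ => ((2 : ℚ_[p]) ^ ((p - 1) * p ^ (m - 1)) - 1) / (p : ℚ_[p]) ^ m)
      atTop (𝓝 ((1 / (p : ℚ_[p])) * plog p ((2 : ℚ_[p]) ^ (p - 1)))) := by
  have hp : p.Prime := Fact.out
  have hp3 : 3 ≤ p := by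
    obtain ⟨t, ht⟩ := hodd
    have := hp.two_le
    omega
  set a : ℚ_[p] := (2 : ℚ_[p]) ^ (p - 1) with ha
  have hxa : ‖a - 1‖ ≤ (p:ℝ)⁻¹ := by
    have h2 : ((2 : ZMod p)) ≠ 0 := by
      have hnd : ¬ (p ∣ 2) := fun h => by have := Nat.le_of_dvd (by norm_num) h; omega
      have : ((2:ℕ) : ZMod p) ≠ 0 := by
        rw [Ne, ZMod.natCast_eq_zero_iff]; exact hnd
      exact_mod_cast this
    have hfermat : ((2 : ZMod p)) ^ (p - 1) = 1 := ZMod.pow_card_sub_one_eq_one h2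
    have hdvd : (p:ℤ) ∣ (2 ^ (p - 1) - 1 : ℤ) := by
      rw [← ZMod.intCast_zmod_eq_zero_iff_dvd]
      push_cast
      rw [hfermat]
      ring
    have hb := (Padic.norm_int_le_pow_iff_dvd (p := p) (2 ^ (p - 1) - 1 : ℤ) 1).2
      (by simpa using hdvd)
    have hc : (((2 ^ (p - 1) - 1 : ℤ)) : ℚ_[p]) = a - 1 := by push_cast [ha]; ring
    rw [hc] at hb
    simpa using hb
  have hkey := aux_key hodd a hxa
  have h1 : Tendsto (fun n : ℕ => 1 / (p:ℚ_[p]) * ((a ^ p ^ n - 1) / (p:ℚ_[p]) ^ n)) atTop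
      (𝓝 (1 / (p:ℚ_[p]) * plog p a)) := hkey.const_mul _
  have h2 : Tendsto (fun m : ℕ => 1 / (p:ℚ_[p]) * ((a ^ p ^ (m - 1) - 1) / (p:ℚ_[p]) ^ (m - 1)))
      atTop (𝓝 (1 / (p:ℚ_[p]) * plog p a)) := h1.comp (tendsto_sub_atTop_nat 1)
  refine Tendsto.congr' ?_ h2
  filter_upwards [eventually_ge_atTop 1] with m hm
  have hpow : (2 : ℚ_[p]) ^ ((p - 1) * p ^ (m - 1)) = a ^ (p ^ (m - 1)) := by
    rw [ha, ← pow_mul]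
  have hm1 : (p:ℚ_[p]) ^ m = (p:ℚ_[p]) * (p:ℚ_[p]) ^ (m - 1) := by
    conv_lhs => rw [show m = 1 + (m - 1) by omega]
    rw [pow_add, pow_one]
  have hpne : (p:ℚ_[p]) ≠ 0 := by
    exact_mod_cast Nat.cast_ne_zero.2 hp.pos.ne'
  rw [hpow, hm1]
  field_simp
end

section
/- Let p be an odd prime and k ≥ 4 even. For every positive integer ℓ, the quantity Σ_{0<d|ℓ, gcd(p,d)=1} d^(k−1) · [σ*_{k−3}(2ℓ²_0/d²) − 2^(k−2) σ*_{k−3}(ℓ²_0/(2d²))] (with σ*_j(x) = Σ_{0<e|x, gcd(p,e)=1} e^j if x ∈ ℕ and 0 otherwise) arises as the p-adic limit of Σ_{0<d|ℓ} d^(k_m−1) [σ_{k_m−3}(2ℓ²_0/d²) − 2^(k_m−2)σ_{k_m−3}(ℓ²_0/(2d²))] along k_m = k + (p−1)p^(m−1), where ℓ²_0 is any fixed positive integer. In particular, for any positive integers ε and D, lim_{m→∞} Σ_{0<d|ε} d^(k_m−1)[σ_{k_m−3}(D/d²) − 2^(k_m−2)σ_{k_m−3}(D/(4d²))] = Σ_{0<d|ε,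 gcd(p,d)=1} d^(k−1)[σ*_{k−3}(D/d²) − 2^(k−2)σ*_{k−3}(D/(4d²))] in ℤ_p. -/
open Filter Topology Finset

/-- `σ_j(D/q)` interpreted as `0` when `D/q` is not a positive integer (i.e. when
`q ∤ D`), and as the sum of `j`-th powers of the positive divisors of `D/q` otherwise. -/
noncomputable def sigmaDiv (p : ℕ) [Fact p.Prime] (j D q : ℕ) : ℤ_[p] :=
  if q ∣ D then ∑ e ∈ (D / q).divisors, (e : ℤ_[p]) ^ j else 0

/-- `σ*_j(D/q)`: as `sigmaDiv`, but summing only over divisors coprime to `p`. -/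
noncomputable def sigmaDivStar (p : ℕ) [Fact p.Prime] (j D q : ℕ) : ℤ_[p] :=
  if q ∣ D then
    ∑ e ∈ (D / q).divisors.filter (fun e => Nat.gcd p e = 1), (e : ℤ_[p]) ^ j
  else 0

variable {p : ℕ} [Fact p.Prime]

lemma aux_dvd_pow_sub_one (y : ℤ_[p]) (hy : (p : ℤ_[p]) ∣ y - 1) (j : ℕ) :
    (p : ℤ_[p]) ^ (j + 1) ∣ y ^ p ^ j - 1 := by
  induction j with
  | zero => simpa using hy
  | succ j ih =>
    have hz : (p : ℤ_[p]) ∣ y ^ p ^ j - 1 := dvd_trans (dvd_pow_self _ (Nat.succ_ne_zero j)) ih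
    set z := y ^ p ^ j with hzdef
    have key : z ^ p - 1 = (z - 1) * ∑ i ∈ Finset.range p, z ^ i := by
      rw [← geom_sum_mul, mul_comm]
    have hS : (p : ℤ_[p]) ∣ ∑ i ∈ Finset.range p, z ^ i := by
      have heq : (∑ i ∈ Finset.range p, z ^ i) =
          (∑ i ∈ Finset.range p, (z ^ i - 1)) + p := by
        rw [Finset.sum_sub_distrib]
        simp
      have hdvd : (p : ℤ_[p]) ∣ ∑ i ∈ Finset.range p, (z ^ i - 1) := by
        refine Finset.dvd_sum fun i _ => ?_
        have : z - 1 ∣ z ^ i - 1 := by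
          simpa using sub_dvd_pow_sub_pow z 1 i
        exact dvd_trans hz this
      rw [heq]
      exact dvd_add hdvd dvd_rfl
    have : y ^ p ^ (j + 1) - 1 = (z - 1) * ∑ i ∈ Finset.range p, z ^ i := by
      rw [← key, hzdef, ← pow_mul, pow_succ]
    rw [this, pow_succ]
    exact mul_dvd_mul ih hS

lemma aux_tendsto_pow_pow (y : ℤ_[p]) (hy : (p : ℤ_[p]) ∣ y - 1) :
    Tendsto (fun j : ℕ => y ^ p ^ j) atTop (𝓝 1) := by
  rw [tendsto_iff_norm_sub_tendsto_zero]
  have hb : ∀ j : ℕ, ‖y ^ p ^ j - 1‖ ≤ ((p : ℝ)⁻¹) ^ (j + 1) := by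
    intro j
    have := (PadicInt.norm_le_pow_iff_mem_span_pow (y ^ p ^ j - 1) (j + 1)).2
      (by rw [Ideal.mem_span_singleton]; exact aux_dvd_pow_sub_one y hy j)
    rwa [zpow_neg, zpow_natCast, ← inv_pow] at this
  have hp1 : (1 : ℝ) < p := Nat.one_lt_cast.2 (Fact.out : p.Prime).one_lt
  have h0 : Tendsto (fun j : ℕ => ((p : ℝ)⁻¹) ^ (j + 1)) atTop (𝓝 0) := by
    have := tendsto_pow_atTop_nhds_zero_of_lt_one (inv_nonneg.2 (by positivity))
      (inv_lt_one_of_one_lt₀ hp1)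
    exact this.comp (tendsto_add_atTop_nat 1)
  exact squeeze_zero (fun j => norm_nonneg _) hb h0

lemma aux_unit_tendsto (n : ℕ) (hn : ¬ p ∣ n) (k c : ℕ) (hc : c ≤ k) :
    Tendsto (fun m : ℕ => (n : ℤ_[p]) ^ (k + (p - 1) * p ^ (m - 1) - c)) atTop
      (𝓝 ((n : ℤ_[p]) ^ (k - c))) := by
  have hexp : ∀ m : ℕ, k + (p - 1) * p ^ (m - 1) - c = (k - c) + (p - 1) * p ^ (m - 1) := by
    intro m; omega
  have hy : (p : ℤ_[p]) ∣ (n : ℤ_[p]) ^ (p - 1) - 1 := by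
    have h1 : ((n : ZMod p)) ≠ 0 := by
      rwa [Ne, ZMod.natCast_eq_zero_iff]
    have h2 : ((n : ZMod p)) ^ (p - 1) = 1 := ZMod.pow_card_sub_one_eq_one h1
    have h3 : (p : ℤ) ∣ (n : ℤ) ^ (p - 1) - 1 := by
      have : (((n : ℤ) ^ (p - 1) - 1 : ℤ) : ZMod p) = 0 := by push_cast [h2]; ring
      exact (ZMod.intCast_zmod_eq_zero_iff_dvd _ p).1 this
    obtain ⟨t, ht⟩ := h3
    refine ⟨(t : ℤ_[p]), ?_⟩
    have := congrArg (fun z : ℤ => (z : ℤ_[p])) ht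
    push_cast at this
    linear_combination this
  have h1 : Tendsto (fun m : ℕ => ((n : ℤ_[p]) ^ (p - 1)) ^ p ^ (m - 1)) atTop (𝓝 1) :=
    (aux_tendsto_pow_pow _ hy).comp (tendsto_sub_atTop_nat 1)
  have h2 := (tendsto_const_nhds (x := (n : ℤ_[p]) ^ (k - c))).mul h1
  rw [mul_one] at h2
  refine h2.congr fun m => ?_
  rw [hexp m, pow_add, ← pow_mul]

lemma aux_nonunit_tendsto (n : ℕ) (hn : p ∣ n) (k c : ℕ) (hc : c < k) :
    Tendsto (fun m : ℕ => (n : ℤ_[p]) ^ (k + (p - 1) * p ^ (m - 1) - c)) atTop (𝓝 0) := by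
  have hnorm : ‖(n : ℤ_[p])‖ < 1 := by
    rw [PadicInt.norm_lt_one_iff_dvd]
    exact_mod_cast Nat.cast_dvd_cast (α := ℤ_[p]) hn
  have hp : 1 < p := (Fact.out : p.Prime).one_lt
  have hE : Tendsto (fun m : ℕ => k + (p - 1) * p ^ (m - 1) - c) atTop atTop := by
    have h1 : Tendsto (fun m : ℕ => p ^ (m - 1)) atTop atTop :=
      (tendsto_pow_atTop_atTop_of_one_lt hp).comp (tendsto_sub_atTop_nat 1)
    refine tendsto_atTop_mono (fun m => ?_) h1
    have : 1 ≤ p - 1 := by omega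
    calc p ^ (m - 1) = 1 * p ^ (m - 1) := (one_mul _).symm
      _ ≤ (p - 1) * p ^ (m - 1) := Nat.mul_le_mul_right _ this
      _ ≤ k + (p - 1) * p ^ (m - 1) - c := by omega
  exact (tendsto_pow_atTop_nhds_zero_of_norm_lt_one hnorm).comp hE

lemma aux_combined_tendsto (n : ℕ) (k c : ℕ) (hc : c < k) :
    Tendsto (fun m : ℕ => (n : ℤ_[p]) ^ (k + (p - 1) * p ^ (m - 1) - c)) atTop
      (𝓝 (if Nat.gcd p n = 1 then (n : ℤ_[p]) ^ (k - c) else 0)) := by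
  by_cases h : Nat.gcd p n = 1
  · rw [if_pos h]
    exact aux_unit_tendsto n (((Fact.out : p.Prime).coprime_iff_not_dvd).1 h) k c hc.le
  · rw [if_neg h]
    have : p ∣ n := by
      by_contra hd
      exact h (((Fact.out : p.Prime).coprime_iff_not_dvd).2 hd)
    exact aux_nonunit_tendsto n this k c hc

lemma aux_sigmaDiv_tendsto (k D q : ℕ) (hk : 3 < k) :
    Tendsto (fun m : ℕ => sigmaDiv p (k + (p - 1) * p ^ (m - 1) - 3) D q) atTop
      (𝓝 (sigmaDivStar p (k - 3) D q)) := by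
  unfold sigmaDiv sigmaDivStar
  by_cases h : q ∣ D
  · simp only [if_pos h]
    rw [Finset.sum_filter]
    exact tendsto_finset_sum _ fun e _ => aux_combined_tendsto e k 3 hk
  · simp only [if_neg h]
    exact tendsto_const_nhds

/-- The rank-two Fourier coefficient convergence: for `k_m = k + (p-1)p^(m-1)`,
`∑_{0<d|ε} d^(k_m-1)[σ_{k_m-3}(D/d²) − 2^(k_m-2) σ_{k_m-3}(D/(4d²))]` converges
`p`-adically to
`∑_{0<d|ε, (p,d)=1} d^(k-1)[σ*_{k-3}(D/d²) − 2^(k-2) σ*_{k-3}(D/(4d²))]`. -/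
theorem padic_limit_rank_two_coeff (p : ℕ) [Fact p.Prime] (hodd : Odd p)
    (k : ℕ) (hk : Even k) (hk4 : 4 ≤ k) (ε D : ℕ) (hε : 0 < ε) (hD : 0 < D) :
    Tendsto
      (fun m : ℕ =>
        ∑ d ∈ ε.divisors,
          (d : ℤ_[p]) ^ (k + (p - 1) * p ^ (m - 1) - 1) *
            (sigmaDiv p (k + (p - 1) * p ^ (m - 1) - 3) D (d ^ 2) -
              2 ^ (k + (p - 1) * p ^ (m - 1) - 2) *
                sigmaDiv p (k + (p - 1) * p ^ (m - 1) - 3) D (4 * d ^ 2)))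
      atTop
      (𝓝 (∑ d ∈ ε.divisors.filter (fun d => Nat.gcd p d = 1),
          (d : ℤ_[p]) ^ (k - 1) *
            (sigmaDivStar p (k - 3) D (d ^ 2) -
              2 ^ (k - 2) * sigmaDivStar p (k - 3) D (4 * d ^ 2)))) := by
  have hp2 : ¬ p ∣ 2 := by
    intro h
    have h2 := (Nat.prime_dvd_prime_iff_eq (Fact.out : p.Prime) Nat.prime_two).1 h
    have := Nat.odd_iff.1 hodd
    omega
  rw [Finset.sum_filter]
  refine tendsto_finset_sum _ fun d _ => ?_
  have h1 := aux_combined_tendsto (p := p) d k 1 (by omega)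
  have h2 := aux_sigmaDiv_tendsto (p := p) k D (d ^ 2) (by omega)
  have h3 := aux_sigmaDiv_tendsto (p := p) k D (4 * d ^ 2) (by omega)
  have h2pow : Tendsto (fun m : ℕ => (2 : ℤ_[p]) ^ (k + (p - 1) * p ^ (m - 1) - 2)) atTop
      (𝓝 ((2 : ℤ_[p]) ^ (k - 2))) := by
    have := aux_unit_tendsto (p := p) 2 hp2 k 2 (by omega)
    simpa using this
  have := h1.mul (h2.sub (h2pow.mul h3))
  rwa [ite_mul, zero_mul] at this
end
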